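/- In type Dₙ with n ≥ 4, the collection labeled by a suffix beginning with s_{n,1}s_{n-1,j₂}⋯ (i.e., whose first segment descends all the way to 1 and which has at least two segments) contains exactly one homogeneous word, namely the suffix itself with empty prefix. Hence every collection in the packet P(n,0) has exactly 1 = C(n,0) element. -/

import Mathlib

/-- Letters `i` and `j` (from `{1, …, n}`) are neighbors in the `Dₙ` Dynkin diagram:
`1 – 2 – ⋯ – (n-2)` is a path, and both `n-1` and `n` are adjacent to `n-2`. -/
def dnAdj (n i j : ℕ) : Prop :=
  (i + 1 = j ∧ j ≤ n - 1) ∨ (j + 1 = i ∧ i ≤ n - 1) ∨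
  (i = n ∧ j = n - 2) ∨ (j = n ∧ i = n - 2)

/-- A word `w` is homogeneous (with respect to a neighbor relation `adj`): whenever the same
letter appears in positions `r < s`, there are positions `t, u` with `r < t < u < s` whose
letters are both neighbors of that letter. -/
def Homog {α : Type*} (adj : α → α → Prop) (w : List α) : Prop :=
  ∀ r s : Fin w.length, (r : ℕ) < s → w.get r = w.get s →
    ∃ t u : Fin w.length, (r : ℕ) < t ∧ (t : ℕ) < u ∧ (u : ℕ) < s ∧
      adj (w.get r) (w.get t) ∧ adj (w.get r) (w.get u)

/-- The descending word `[a, a-1, …, b]` (empty if `a < b`). -/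
def desc (a b : ℕ) : List ℕ := (List.range (a + 1 - b)).map (fun t => a - t)

/-- The suffix word `s_{n,j₁} s_{n-1,j₂} s_{n,j₃} ⋯` of type `Dₙ` determined by the indices
`j₁ < j₂ < ⋯ < j_ℓ`; the boolean records whether the next segment starts with `n` (`true`)
or with `n-1` (`false`). -/
def suffixWord (n : ℕ) : Bool → List ℕ → List ℕ
  | _, [] => []
  | b, j :: js => ((if b then n else n - 1) :: desc (n - 2) j) ++ suffixWord n (!b) js

/-- Validity of the indices `j₁ < j₂ < ⋯ < j_ℓ` of a suffix: strictly increasing and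
contained in `{1, …, n-1}`. -/
def ValidSuffixIdx (n : ℕ) (js : List ℕ) : Prop :=
  js.Chain' (· < ·) ∧ ∀ j ∈ js, 1 ≤ j ∧ j ≤ n - 1

/-- The prefix word `s_{1,i₁} s_{2,i₂} ⋯ s_{n-1,i_{n-1}}` where `s_{k,i} = [k, k-1, …, i]`. -/
def prefixWord (n : ℕ) (i : ℕ → ℕ) : List ℕ :=
  (List.range (n - 1)).flatMap (fun k => desc (k + 1) (i (k + 1)))

/-- Validity of the indices of a prefix: `1 ≤ i_k ≤ k + 1` for `1 ≤ k ≤ n-1`. -/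
def ValidPrefixIdx (n : ℕ) (i : ℕ → ℕ) : Prop :=
  ∀ k, 1 ≤ k → k ≤ n - 1 → 1 ≤ i k ∧ i k ≤ k + 1

/-- The collection labeled by a suffix `suf`: all homogeneous canonical words of type `Dₙ`
with suffix `suf`. -/
def collection (n : ℕ) (suf : List ℕ) : Set (List ℕ) :=
  {w | ∃ i, ValidPrefixIdx n i ∧ w = prefixWord n i ++ suf ∧ Homog (dnAdj n) w}

open List

section Helpers

variable {α : Type*}

lemma mem_desc {a b m : ℕ} : m ∈ desc a b ↔ b ≤ m ∧ m ≤ a := by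
  simp only [desc, List.mem_map, List.mem_range]
  constructor
  · rintro ⟨t, ht, rfl⟩; omega
  · rintro ⟨h1, h2⟩; exact ⟨a - m, by omega, by omega⟩

lemma desc_eq_nil {a b : ℕ} (h : a < b) : desc a b = [] := by
  simp [desc, Nat.sub_eq_zero_of_le h]

lemma nodup_desc (a b : ℕ) : (desc a b).Nodup := by
  refine List.Nodup.map_on ?_ List.nodup_range
  intro x hx y hy hxy
  simp only [List.mem_range] at hx hy
  omega

lemma desc_cons {a b : ℕ} (hb : 1 ≤ b) (h : b ≤ a) : desc a b = a :: desc (a - 1) b := by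
  have h1 : a + 1 - b = (a - b) + 1 := by omega
  simp only [desc, h1, List.range_succ_eq_map]
  simp only [List.map_cons, Nat.sub_zero, List.map_map]
  have h2 : a - 1 + 1 - b = a - b := by omega
  rw [h2]
  congr 1
  apply List.map_congr_left
  intro t ht
  simp only [List.mem_range] at ht
  simp only [Function.comp_apply]
  omega

lemma desc_append {a b c : ℕ} (hb : 1 ≤ b) (hbc : b ≤ c + 1) (hca : c ≤ a) :
    desc a b = desc a (c + 1) ++ desc c b := by
  have h1 : a + 1 - b = (a - c) + (c + 1 - b) := by omega
  simp only [desc, h1, List.range_add, List.map_append, List.map_map]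
  have h2 : a + 1 - (c + 1) = a - c := by omega
  rw [h2]
  congr 1
  apply List.map_congr_left
  intro t ht
  simp only [List.mem_range, Function.comp_apply] at *
  omega

lemma split_helper {s w y z : List α} {a : α} (h : s ++ w = y ++ a :: z) (ha : a ∉ s) :
    ∃ y₃, y = s ++ y₃ ∧ w = y₃ ++ a :: z := by
  rcases List.append_eq_append_iff.mp h with ⟨a', h1, h2⟩ | ⟨c', h1, h2⟩
  · exact ⟨a', h1, h2⟩
  · cases c' with
    | nil =>
      refine ⟨[], ?_, ?_⟩
      · simp at h1; simp [h1]
      · simp at h2; simp [h2]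
    | cons e c'' =>
      exfalso
      rw [List.cons_append] at h2
      injection h2 with hae hz
      exact ha (by rw [h1, ← hae]; simp)

lemma desc_decomp {a b m : ℕ} {x t : List ℕ} (hb : 1 ≤ b) (h : desc a b = x ++ m :: t) :
    b ≤ m ∧ m ≤ a ∧ t = desc (m - 1) b := by
  have hm : m ∈ desc a b := by rw [h]; simp
  rw [mem_desc] at hm
  obtain ⟨h1, h2⟩ := hm
  refine ⟨h1, h2, ?_⟩
  have hsplit : desc a b = desc a (m + 1) ++ m :: desc (m - 1) b := by
    rw [desc_append hb (by omega) h2, desc_cons hb h1]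
  have hnd : (x ++ m :: t).Nodup := h ▸ nodup_desc a b
  have hmx : m ∉ x := fun hx => (List.nodup_append.mp hnd).2.2 m hx m (by simp) rfl
  have hkey : x ++ (m :: t) = desc a (m + 1) ++ m :: desc (m - 1) b := by
    rw [← h, hsplit]
  obtain ⟨y₃, h4, h5⟩ := split_helper hkey hmx
  cases y₃ with
  | nil => simpa using h5
  | cons e y' =>
    exfalso
    have he : e = m := (List.cons.injEq .. ▸ h5).1.symm
    have : m ∈ desc a (m + 1) := by rw [h4, he]; simp
    rw [mem_desc] at this; omega

lemma pair_sublist_indices {b c : α} : ∀ {l : List α}, [b, c] <+ l →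
    ∃ i j, ∃ (hj : j < l.length), ∃ (hi : i < l.length), i < j ∧ l[i] = b ∧ l[j] = c := by
  intro l h
  induction l with
  | nil => simp at h
  | cons d l ih =>
    rcases h with _ | ⟨_, h⟩ | ⟨_, h⟩
    · rcases ih ‹_› with ⟨i, j, hj, hi, hij, hb, hc⟩
      exact ⟨i + 1, j + 1, by simpa using hj, by simpa using hi, by omega, by simpa using hb,
        by simpa using hc⟩
    · have hc : c ∈ l := List.singleton_sublist.mp ‹_›
      rcases List.getElem_of_mem hc with ⟨j, hj, hcj⟩
      exact ⟨0, j + 1, by simpa using hj, by simp, by omega, rfl, by simpa using hcj⟩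

lemma pair_sublist_of_indices {l : List α} {i j : ℕ} (hij : i < j) (hj : j < l.length) :
    [l[i]'(by omega), l[j]] <+ l := by
  have h1 : l.drop i = l[i]'(by omega) :: l.drop (i + 1) := List.drop_eq_getElem_cons (by omega)
  have h2 : l[j] ∈ l.drop (i + 1) := by
    have : (l.drop (i + 1))[j - (i+1)]'(by simp; omega) = l[j] := by
      rw [List.getElem_drop]; congr 1; omega
    rw [← this]; exact List.getElem_mem _
  calc [l[i]'(by omega), l[j]] <+ l[i]'(by omega) :: l.drop (i + 1) :=
        List.Sublist.cons₂ _ (List.singleton_sublist.mpr h2)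
    _ <+ l := by rw [← h1]; exact List.drop_sublist i l

lemma homog_iff (adj : α → α → Prop) (w : List α) :
    Homog adj w ↔ ∀ x y z (a : α), w = x ++ a :: (y ++ a :: z) →
      ∃ b c, [b, c] <+ y ∧ adj a b ∧ adj a c := by
  constructor
  · intro H x y z a hw
    have hr : x.length < w.length := by subst hw; simp
    have hs : x.length + 1 + y.length < w.length := by subst hw; simp; omega
    have hget : ∀ (k : ℕ) (hk : k < w.length), w[k] = (x ++ a :: (y ++ a :: z))[k]'(hw ▸ hk) := by
      intro k hk; congr 1
    have hgr : w[x.length] = a := by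
      rw [hget _ hr, List.getElem_append_right (le_refl _)]
      simp
    have hgs : w[x.length + 1 + y.length] = a := by
      rw [hget _ hs, List.getElem_append_right (by omega)]
      have h6 : x.length + 1 + y.length - x.length = y.length + 1 := by omega
      simp only [h6]
      rw [List.getElem_cons_succ, List.getElem_append_right (le_refl _)]
      simp
    obtain ⟨t, u, h1, h2, h3, h4, h5⟩ := H ⟨x.length, hr⟩ ⟨x.length + 1 + y.length, hs⟩
      (by simp; omega) (by simp only [List.get_eq_getElem]; rw [hgr, hgs])
    have h1' : x.length < (t : ℕ) := h1
    have h3' : (u : ℕ) < x.length + 1 + y.length := h3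
    simp only [List.get_eq_getElem] at h4 h5
    rw [hgr] at h4 h5
    have hy : ∀ (k : ℕ) (hk : k < w.length) (hk1 : x.length < k)
        (hk2 : k < x.length + 1 + y.length), w[k] = y[k - x.length - 1]'(by omega) := by
      intro k hk hk1 hk2
      rw [hget _ hk, List.getElem_append_right (by omega)]
      obtain ⟨m, hm⟩ : ∃ m, k - x.length = m + 1 := ⟨k - x.length - 1, by omega⟩
      have hm' : k - x.length - 1 = m := by omega
      simp only [hm, hm', List.getElem_cons_succ]
      rw [List.getElem_append_left (by omega)]
      simp
    refine ⟨w[(t:ℕ)], w[(u:ℕ)], ?_, h4, h5⟩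
    rw [hy t t.2 h1' (by omega), hy u u.2 (by omega) h3']
    exact pair_sublist_of_indices (by omega) (by omega)
  · intro H r s hrs heq
    have hrw : (r : ℕ) < w.length := r.2
    have hsw : (s : ℕ) < w.length := s.2
    have haa : w[(r : ℕ)] = w[(s : ℕ)] := by
      simpa only [List.get_eq_getElem] using heq
    have e1 : w.drop (s : ℕ) = w[(r:ℕ)] :: w.drop (s + 1) := by
      rw [List.drop_eq_getElem_cons hsw, haa]
    have e2 : w.drop ((r:ℕ) + 1) =
        (w.drop ((r:ℕ) + 1)).take ((s:ℕ) - r - 1) ++ w[(r:ℕ)] :: w.drop ((s:ℕ) + 1) := by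
      conv_lhs => rw [← List.take_append_drop ((s:ℕ) - r - 1) (w.drop ((r:ℕ) + 1))]
      rw [List.drop_drop]
      have h7 : (r : ℕ) + 1 + ((s:ℕ) - r - 1) = s := by omega
      rw [h7, e1]
    have hdec : w = w.take (r:ℕ) ++ w[(r:ℕ)] ::
        ((w.drop ((r:ℕ) + 1)).take ((s:ℕ) - r - 1) ++ w[(r:ℕ)] :: w.drop ((s:ℕ) + 1)) := by
      conv_lhs => rw [← List.take_append_drop (r : ℕ) w]
      rw [List.drop_eq_getElem_cons hrw, ← e2]
    obtain ⟨b, c, hbc, hab, hac⟩ := H _ _ _ _ hdec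
    obtain ⟨i, j, hj, hi, hij, hbi, hcj⟩ := pair_sublist_indices hbc
    have hylen : ((w.drop ((r:ℕ) + 1)).take ((s:ℕ) - r - 1)).length = (s : ℕ) - r - 1 := by
      simp; omega
    rw [hylen] at hi hj
    have hti : (r : ℕ) + 1 + i < w.length := by omega
    have htj : (r : ℕ) + 1 + j < w.length := by omega
    have hwi : w[(r:ℕ) + 1 + i] = b := by rw [← hbi, List.getElem_take, List.getElem_drop]
    have hwj : w[(r:ℕ) + 1 + j] = c := by rw [← hcj, List.getElem_take, List.getElem_drop]
    refine ⟨⟨(r:ℕ) + 1 + i, hti⟩, ⟨(r:ℕ) + 1 + j, htj⟩, show (r:ℕ) < (r:ℕ) + 1 + i by omega,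
      show (r:ℕ) + 1 + i < (r:ℕ) + 1 + j by omega, show (r:ℕ) + 1 + j < (s:ℕ) by omega,
      ?_, ?_⟩
    · simp only [List.get_eq_getElem, hwi]; exact hab
    · simp only [List.get_eq_getElem, hwj]; exact hac

lemma mem_suffixWord {n m : ℕ} : ∀ {js : List ℕ} {b : Bool}, m ∈ suffixWord n b js →
    m = n ∨ m = n - 1 ∨ ∃ j ∈ js, j ≤ m ∧ m ≤ n - 2 := by
  intro js
  induction js with
  | nil => intro b h; simp [suffixWord] at h
  | cons j js ih =>
    intro b h
    simp only [suffixWord, List.mem_append, List.mem_cons] at h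
    rcases h with (h | h) | h
    · cases b <;> simp_all
    · rw [mem_desc] at h
      exact Or.inr (Or.inr ⟨j, by simp, h.1, h.2⟩)
    · rcases ih h with h | h | ⟨j', hj', h1, h2⟩
      · exact Or.inl h
      · exact Or.inr (Or.inl h)
      · exact Or.inr (Or.inr ⟨j', by simp [hj'], h1, h2⟩)

lemma mem_prefixWord {n m : ℕ} {i : ℕ → ℕ} (hv : ValidPrefixIdx n i)
    (h : m ∈ prefixWord n i) : 1 ≤ m ∧ m ≤ n - 1 := by
  simp only [prefixWord, List.mem_flatMap, List.mem_range] at h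
  obtain ⟨k, hk, hm⟩ := h
  rw [mem_desc] at hm
  have := hv (k + 1) (by omega) (by omega)
  omega

lemma nodup_seg {n h j : ℕ} (hn : 4 ≤ n) (hh : n - 1 ≤ h) : (h :: desc (n - 2) j).Nodup := by
  refine List.nodup_cons.mpr ⟨?_, nodup_desc _ _⟩
  rw [mem_desc]; omega

lemma homog_suffix (n : ℕ) (hn : 4 ≤ n) : ∀ (js : List ℕ) (bb : Bool),
    js.Chain' (· < ·) → (∀ j ∈ js, 1 ≤ j ∧ j ≤ n - 1) →
    ∀ x y z a, suffixWord n bb js = x ++ a :: (y ++ a :: z) →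
    ∃ b' c', [b', c'] <+ y ∧ dnAdj n a b' ∧ dnAdj n a c' := by
  intro js
  induction js with
  | nil => intro bb _ _ x y z a h; simp [suffixWord] at h
  | cons j js' ih =>
    intro bb hchain hbound x y z a heq
    set h : ℕ := if bb then n else n - 1 with hh
    have hhge : n - 1 ≤ h := by rw [hh]; split <;> omega
    have hj1 : 1 ≤ j := (hbound j (by simp)).1
    have hjn : j ≤ n - 1 := (hbound j (by simp)).2
    rw [suffixWord] at heq
    rw [← hh] at heq
    set w' : List ℕ := suffixWord n (!bb) js' with hw'
    have ihtail : ∀ x y z a, w' = x ++ a :: (y ++ a :: z) →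
        ∃ b' c', [b', c'] <+ y ∧ dnAdj n a b' ∧ dnAdj n a c' :=
      ih (!bb) hchain.tail (fun j hj => hbound j (by simp [hj]))
    rcases List.append_eq_append_iff.mp heq with ⟨x', hx, hw2⟩ | ⟨c', hS, hrest⟩
    · exact ihtail x' y z a hw2
    · cases c' with
      | nil =>
        simp only [List.append_nil] at hS
        simp only [List.nil_append] at hrest
        exact ihtail [] y z a hrest.symm
      | cons e c'' =>
        rw [List.cons_append] at hrest
        injection hrest with hae hrest2
        subst hae
        -- hS : h :: desc (n-2) j = x ++ a :: c'',  hrest2 : y ++ a :: z = c'' ++ w'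
        obtain ⟨y₂, hy₂, hw₂⟩ : ∃ y₂, y = c'' ++ y₂ ∧ w' = y₂ ++ a :: z := by
          rcases List.append_eq_append_iff.mp hrest2.symm with ⟨a₂, h1, h2⟩ | ⟨c₂, h1, h2⟩
          · exact ⟨a₂, h1, h2⟩
          · cases c₂ with
            | nil =>
              refine ⟨[], ?_, ?_⟩
              · simp at h1; simp [h1]
              · simp at h2; simp [h2]
            | cons f c₃ =>
              exfalso
              rw [List.cons_append] at h2
              injection h2 with haf hz
              have hmem : a ∈ c'' := by rw [h1, ← haf]; simp
              have hnd : (x ++ a :: c'').Nodup := hS ▸ nodup_seg hn hhge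
              have hnd2 : (a :: c'').Nodup := hnd.of_append_right
              exact (List.nodup_cons.mp hnd2).1 hmem
        -- a occurs in w', so js' is nonempty
        cases js' with
        | nil =>
          exfalso
          rw [hw'] at hw₂
          simp [suffixWord] at hw₂
        | cons j' js'' =>
          have hj'1 : 1 ≤ j' := (hbound j' (by simp)).1
          have hj'n : j' ≤ n - 1 := (hbound j' (by simp)).2
          have hjj' : j < j' := (List.isChain_cons_cons.mp hchain).1
          set h' : ℕ := if (!bb) then n else n - 1 with hh'
          have hh'ge : n - 1 ≤ h' := by rw [hh']; split <;> omega
          have hhne : h ≠ h' := by rw [hh, hh']; cases bb <;> simp <;> omega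
          have hw'eq : w' = (h' :: desc (n - 2) j') ++ suffixWord n bb js'' := by
            rw [hw', suffixWord, ← hh', Bool.not_not]
          cases x with
          | nil =>
            simp only [List.nil_append] at hS
            injection hS with hah hc''
            -- a = h, c'' = desc (n-2) j
            have haS' : a ∉ h' :: desc (n - 2) j' := by
              simp only [List.mem_cons, mem_desc]
              push_neg
              refine ⟨hah ▸ hhne, fun _ => by omega⟩
            obtain ⟨y₃, hy₃, hw₃⟩ := split_helper (hw'eq ▸ hw₂) haS'
            cases js'' with
            | nil =>
              exfalso
              simp [suffixWord] at hw₃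
            | cons j'' js₃ =>
              have hj''n : j'' ≤ n - 1 := (hbound j'' (by simp)).2
              have hj'j'' : j' < j'' := (List.isChain_cons_cons.mp hchain.tail).1
              have hj'2 : j' ≤ n - 2 := by omega
              have hj2 : j ≤ n - 2 := by omega
              refine ⟨n - 2, n - 2, ?_, ?_, ?_⟩
              · rw [hy₂, ← hc'', hy₃, desc_cons hj1 hj2, desc_cons hj'1 hj'2]
                refine List.Sublist.cons₂ _ ?_
                rw [List.singleton_sublist]
                simp
              · rw [← hah, hh]; cases bb <;> simp [dnAdj] <;> omega
              · rw [← hah, hh]; cases bb <;> simp [dnAdj] <;> omega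
          | cons e x' =>
            rw [List.cons_append] at hS
            injection hS with hhe hdesc
            obtain ⟨hja, han2, hc''⟩ := desc_decomp hj1 hdesc
            have hja' : j' ≤ a := by
              by_contra hja'
              push_neg at hja'
              have haS' : a ∉ h' :: desc (n - 2) j' := by
                simp only [List.mem_cons, mem_desc]
                push_neg
                refine ⟨by omega, fun hc => by omega⟩
              obtain ⟨y₃, hy₃, hw₃⟩ := split_helper (hw'eq ▸ hw₂) haS'
              have hmem : a ∈ suffixWord n bb js'' := by rw [hw₃]; simp
              rcases mem_suffixWord hmem with h1 | h1 | ⟨jj, hjj, h1, h2⟩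
              · omega
              · omega
              · have hpw := List.isChain_iff_pairwise.mp hchain.tail
                have := (List.pairwise_cons.mp hpw).1 jj hjj
                omega
            have hw'dec : w' = (h' :: desc (n - 2) (a + 1)) ++
                (a :: (desc (a - 1) j' ++ suffixWord n bb js'')) := by
              rw [hw'eq, desc_append hj'1 (by omega) han2, desc_cons hj'1 hja']
              simp
            have hap : a ∉ h' :: desc (n - 2) (a + 1) := by
              simp only [List.mem_cons, mem_desc]
              push_neg
              refine ⟨by omega, fun hc => by omega⟩
            obtain ⟨y₃, hy₃, -⟩ := split_helper (hw'dec ▸ hw₂) hap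
            have hja1 : j ≤ a - 1 := by omega
            by_cases han : a = n - 2
            · refine ⟨a - 1, h', ?_, ?_, ?_⟩
              · rw [hy₂, hc'', hy₃, desc_cons hj1 hja1]
                refine List.Sublist.cons₂ _ ?_
                rw [List.singleton_sublist]
                simp
              · simp [dnAdj]; omega
              · rw [hh']; cases bb <;> simp [dnAdj] <;> omega
            · refine ⟨a - 1, a + 1, ?_, ?_, ?_⟩
              · rw [hy₂, hc'', hy₃, desc_cons hj1 hja1]
                refine List.Sublist.cons₂ _ ?_
                rw [List.singleton_sublist]
                have : a + 1 ∈ desc (n - 2) (a + 1) := by rw [mem_desc]; omega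
                simp [this]
              · simp [dnAdj]; omega
              · simp [dnAdj]; omega

lemma nodup_no_pair {α : Type} {a : α} {l : List α} (hnd : l.Nodup) (h : [a, a] <+ l) :
    False := by
  obtain ⟨i, j, hj, hi, hij, h1, h2⟩ := pair_sublist_indices h
  have := hnd.getElem_inj_iff.mp (h1.trans h2.symm)
  omega


end Helpers

/-- For `n ≥ 4`, the collection labeled by a suffix whose first segment descends all the way
to `1` and which has at least two segments contains exactly one homogeneous word: the suffix
itself (with empty prefix). In particular every collection in the packet `P(n,0)` has
exactly `1 = C(n,0)` element. -/
theorem packet_zero_collection (n : ℕ) (hn : 4 ≤ n) (js : List ℕ)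
    (hjs : ValidSuffixIdx n js) (hhead : js.head? = some 1) (hlen : 2 ≤ js.length) :
    collection n (suffixWord n true js) = {suffixWord n true js} := by
  obtain ⟨hchain, hbound⟩ := hjs
  cases js with
  | nil => simp at hhead
  | cons j1 js2 =>
  cases js2 with
  | nil => simp at hlen
  | cons j₂ js₃ =>
  have hj1 : j1 = 1 := by simpa using hhead
  subst hj1
  have hj₂1 : 1 ≤ j₂ := (hbound j₂ (by simp)).1
  have hsuf : suffixWord n true (1 :: j₂ :: js₃) =
      n :: (desc (n - 2) 1 ++ ((n - 1) :: (desc (n - 2) j₂ ++ suffixWord n true js₃))) := by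
    rw [suffixWord, suffixWord]
    simp
  ext w
  simp only [Set.mem_singleton_iff]
  constructor
  · rintro ⟨i, hvi, hw, hH⟩
    rcases (prefixWord n i).eq_nil_or_concat with hp | ⟨p₀, m, hp⟩
    · rw [hw, hp]; simp
    · exfalso
      rw [List.concat_eq_append] at hp
      have hm : m ∈ prefixWord n i := by rw [hp]; simp
      have hm1 := mem_prefixWord hvi hm
      have H := (homog_iff _ _).mp hH
      by_cases hmn : m ≤ n - 2
      · have hds : desc (n - 2) 1 = desc (n - 2) (m + 1) ++ (m :: desc (m - 1) 1) := by
          rw [desc_append (a := n - 2) (b := 1) (c := m) (le_refl 1) (by omega) (by omega),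
            desc_cons (a := m) (b := 1) (le_refl 1) (by omega)]
        have hdec : w = p₀ ++ m :: ((n :: desc (n - 2) (m + 1)) ++ m ::
            (desc (m - 1) 1 ++ ((n - 1) :: (desc (n - 2) j₂ ++ suffixWord n true js₃)))) := by
          rw [hw, hp, hsuf, hds]
          simp
        obtain ⟨b, c, hbc, hab, hac⟩ := H _ _ _ _ hdec
        by_cases hm2 : m = n - 2
        · have hy : desc (n - 2) (m + 1) = [] := desc_eq_nil (by omega)
          rw [hy] at hbc
          have := hbc.length_le
          simp at this
        · have hbm : b = m + 1 := by
            have hby : b ∈ n :: desc (n - 2) (m + 1) := hbc.subset (by simp)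
            simp only [List.mem_cons, mem_desc] at hby
            rcases hab with ⟨h1, h2⟩ | ⟨h1, h2⟩ | ⟨h1, h2⟩ | ⟨h1, h2⟩ <;> omega
          have hcm : c = m + 1 := by
            have hcy : c ∈ n :: desc (n - 2) (m + 1) := hbc.subset (by simp)
            simp only [List.mem_cons, mem_desc] at hcy
            rcases hac with ⟨h1, h2⟩ | ⟨h1, h2⟩ | ⟨h1, h2⟩ | ⟨h1, h2⟩ <;> omega
          subst hbm; subst hcm
          refine nodup_no_pair ?_ hbc
          refine List.nodup_cons.mpr ⟨?_, nodup_desc _ _⟩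
          rw [mem_desc]; omega
      · have hmeq : m = n - 1 := by omega
        have hdec : w = p₀ ++ m :: ((n :: desc (n - 2) 1) ++ m ::
            (desc (n - 2) j₂ ++ suffixWord n true js₃)) := by
          rw [hw, hp, hsuf, hmeq]
          simp
        obtain ⟨b, c, hbc, hab, hac⟩ := H _ _ _ _ hdec
        have hbm : b = n - 2 := by
          have hby : b ∈ n :: desc (n - 2) 1 := hbc.subset (by simp)
          simp only [List.mem_cons, mem_desc] at hby
          rcases hab with ⟨h1, h2⟩ | ⟨h1, h2⟩ | ⟨h1, h2⟩ | ⟨h1, h2⟩ <;> omega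
        have hcm : c = n - 2 := by
          have hcy : c ∈ n :: desc (n - 2) 1 := hbc.subset (by simp)
          simp only [List.mem_cons, mem_desc] at hcy
          rcases hac with ⟨h1, h2⟩ | ⟨h1, h2⟩ | ⟨h1, h2⟩ | ⟨h1, h2⟩ <;> omega
        subst hbm; subst hcm
        refine nodup_no_pair ?_ hbc
        refine List.nodup_cons.mpr ⟨?_, nodup_desc _ _⟩
        rw [mem_desc]; omega
  · rintro rfl
    refine ⟨fun k => k + 1, fun k hk1 hk2 => ⟨Nat.succ_le_succ (Nat.zero_le k), Nat.le_refl _⟩, ?_, ?_⟩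
    · have hpre : prefixWord n (fun k => k + 1) = [] := by
        rw [List.eq_nil_iff_forall_not_mem]
        intro x hx
        simp only [prefixWord, List.mem_flatMap, List.mem_range] at hx
        obtain ⟨k, hk, hxm⟩ := hx
        rw [mem_desc] at hxm
        omega
      rw [hpre, List.nil_append]
    · exact (homog_iff _ _).mpr
        (fun x y z a h => homog_suffix n hn _ true hchain hbound x y z a h)
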